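/- The McSplit upper bound is sound for labelled graphs: let M be a partial injective vertex mapping between finite vertex-labelled graphs G₁ and G₂, and partition the unmatched vertices of G₁ and G₂ into label classes, where two unmatched vertices u ∈ V₁ and v ∈ V₂ belong to the same label class iff they have the same label and, for every matched pair (a,b) ∈ M, u is adjacent to a exactly when v is adjacent to b. Then every extension of M to a larger common induced subgraph mapping has size at most |M| + Σ over label classes l of min(number of unmatched G₁-vertices in l, number of unmatched G₂-vertices in l). -/

import Mathlib

/-- `M` is a common induced (label-preserving) subgraph mapping between vertex-labelled
graphs `G₁` and `G₂`: a set of pairs that is injective in both coordinates (a partial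
injective function), preserves labels, and preserves and reflects adjacency. -/
def IsCISMap {α β : Type} (G₁ : SimpleGraph α) (G₂ : SimpleGraph β)
    (L₁ : α → ℕ) (L₂ : β → ℕ) (M : Finset (α × β)) : Prop :=
  (∀ p ∈ M, ∀ q ∈ M, (p.1 = q.1 ↔ p.2 = q.2)) ∧
  (∀ p ∈ M, L₁ p.1 = L₂ p.2) ∧
  (∀ p ∈ M, ∀ q ∈ M, (G₁.Adj p.1 q.1 ↔ G₂.Adj p.2 q.2))

/-- The McSplit label-class *signature* of an unmatched vertex `u` of `G₁` with respect
to the partial mapping `M`: its label together with its adjacency pattern to the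
matched pairs. Two unmatched vertices `u ∈ V₁` and `v ∈ V₂` lie in the same label
class iff their signatures coincide. -/
def sigA {α β : Type} [DecidableEq α] [DecidableEq β]
    (G₁ : SimpleGraph α) [DecidableRel G₁.Adj] (L₁ : α → ℕ)
    (M : Finset (α × β)) (u : α) : ℕ × (α × β → Bool) :=
  (L₁ u, fun p => decide (p ∈ M ∧ G₁.Adj u p.1))

/-- The signature of an unmatched vertex `v` of `G₂` with respect to `M`. -/
def sigB {α β : Type} [DecidableEq α] [DecidableEq β]
    (G₂ : SimpleGraph β) [DecidableRel G₂.Adj] (L₂ : β → ℕ)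
    (M : Finset (α × β)) (v : β) : ℕ × (α × β → Bool) :=
  (L₂ v, fun p => decide (p ∈ M ∧ G₂.Adj v p.2))

/-- The McSplit upper bound for the partial mapping `M`:
`|M| + Σ over label classes l of min(|l ∩ V₁|, |l ∩ V₂|)`, where the label classes
partition the unmatched vertices by signature. -/
def mcsplitBound {α β : Type} [Fintype α] [Fintype β] [DecidableEq α] [DecidableEq β]
    (G₁ : SimpleGraph α) (G₂ : SimpleGraph β)
    [DecidableRel G₁.Adj] [DecidableRel G₂.Adj]
    (L₁ : α → ℕ) (L₂ : β → ℕ) (M : Finset (α × β)) : ℕ :=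
  M.card +
    ∑ s ∈ ((Finset.univ.filter fun u : α => ∀ p ∈ M, p.1 ≠ u).image (sigA G₁ L₁ M)
          ∪ (Finset.univ.filter fun v : β => ∀ p ∈ M, p.2 ≠ v).image (sigB G₂ L₂ M)),
      min ((Finset.univ.filter fun u : α =>
              (∀ p ∈ M, p.1 ≠ u) ∧ sigA G₁ L₁ M u = s).card)
          ((Finset.univ.filter fun v : β =>
              (∀ p ∈ M, p.2 ≠ v) ∧ sigB G₂ L₂ M v = s).card)

/-- The McSplit upper bound is sound for labelled graphs: every
extension of a partial common induced subgraph mapping `M` to a larger common induced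
subgraph mapping has size at most
`|M| + Σ over label classes l of min(|l ∩ V₁|, |l ∩ V₂|)`. -/
theorem mcsplit_bound_sound {α β : Type} [Fintype α] [Fintype β]
    [DecidableEq α] [DecidableEq β]
    (G₁ : SimpleGraph α) (G₂ : SimpleGraph β)
    [DecidableRel G₁.Adj] [DecidableRel G₂.Adj]
    (L₁ : α → ℕ) (L₂ : β → ℕ)
    (M : Finset (α × β)) (hM : IsCISMap G₁ G₂ L₁ L₂ M) :
    ∀ M' : Finset (α × β), IsCISMap G₁ G₂ L₁ L₂ M' → M ⊆ M' →
      M'.card ≤ mcsplitBound G₁ G₂ L₁ L₂ M := by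
  intro M' hM' hsub
  obtain ⟨hinj, hlab, hadj⟩ := hM'
  set D := M' \ M with hD
  -- unmatched facts
  have hun1 : ∀ p ∈ D, ∀ q ∈ M, q.1 ≠ p.1 := by
    intro p hp q hq h
    rw [Finset.mem_sdiff] at hp
    have := (hinj q (hsub hq) p hp.1).1 h
    exact hp.2 (by rwa [show p = q from Prod.ext h.symm this.symm])
  have hun2 : ∀ p ∈ D, ∀ q ∈ M, q.2 ≠ p.2 := by
    intro p hp q hq h
    rw [Finset.mem_sdiff] at hp
    have := (hinj q (hsub hq) p hp.1).2 h
    exact hp.2 (by rwa [show p = q from Prod.ext this.symm h.symm])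
  have hsig : ∀ p ∈ D, sigA G₁ L₁ M p.1 = sigB G₂ L₂ M p.2 := by
    intro p hp
    rw [Finset.mem_sdiff] at hp
    unfold sigA sigB
    refine Prod.ext (hlab p hp.1) ?_
    funext q
    simp only [decide_eq_decide]
    constructor
    · rintro ⟨hq, ha⟩
      exact ⟨hq, (hadj p hp.1 q (hsub hq)).1 ha⟩
    · rintro ⟨hq, ha⟩
      exact ⟨hq, (hadj p hp.1 q (hsub hq)).2 ha⟩
  have hcard : M'.card = M.card + D.card := by
    have := Finset.card_le_card hsub
    rw [hD, Finset.card_sdiff_of_subset hsub]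
    omega
  rw [hcard, mcsplitBound]
  refine Nat.add_le_add_left ?_ _
  set g : α × β → ℕ × (α × β → Bool) := fun p => sigA G₁ L₁ M p.1 with hg
  have hgroup : D.card = ∑ s ∈ D.image g, (D.filter fun p => g p = s).card :=
    Finset.card_eq_sum_card_image g D
  rw [hgroup]
  have hsubset : D.image g ⊆
      ((Finset.univ.filter fun u : α => ∀ p ∈ M, p.1 ≠ u).image (sigA G₁ L₁ M)
        ∪ (Finset.univ.filter fun v : β => ∀ p ∈ M, p.2 ≠ v).image (sigB G₂ L₂ M)) := by
    intro s hs
    rw [Finset.mem_image] at hs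
    obtain ⟨p, hp, rfl⟩ := hs
    apply Finset.mem_union_left
    rw [Finset.mem_image]
    exact ⟨p.1, Finset.mem_filter.2 ⟨Finset.mem_univ _, fun q hq => hun1 p hp q hq⟩, rfl⟩
  refine le_trans (Finset.sum_le_sum ?_) (Finset.sum_le_sum_of_subset hsubset)
  intro s hs
  refine le_min ?_ ?_
  · apply Finset.card_le_card_of_injOn (fun p => p.1)
    · intro p hp
      rw [Finset.mem_coe, Finset.mem_filter] at hp ⊢
      exact ⟨Finset.mem_univ _, fun q hq => hun1 p hp.1 q hq, hp.2⟩
    · intro p hp q hq h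
      rw [Finset.mem_coe, Finset.mem_filter, hD, Finset.mem_sdiff] at hp hq
      exact Prod.ext h ((hinj p hp.1.1 q hq.1.1).1 h)
  · apply Finset.card_le_card_of_injOn (fun p => p.2)
    · intro p hp
      rw [Finset.mem_coe, Finset.mem_filter] at hp ⊢
      refine ⟨Finset.mem_univ _, fun q hq => hun2 p hp.1 q hq, ?_⟩
      rw [← hsig p hp.1]
      exact hp.2
    · intro p hp q hq h
      rw [Finset.mem_coe, Finset.mem_filter, hD, Finset.mem_sdiff] at hp hq
      exact Prod.ext ((hinj p hp.1.1 q hq.1.1).2 h) h
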